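/- arXiv:1105.2206 — 2 statements merged into one kernel-verified Lean document; each statement's English description precedes it below -/
import Mathlib

section
/- Fix constants h, H > 0, k, and let σ = h² + 2Hk. Define the 3×3 matrix-valued function t ↦ U_t by: if σ > 0, U_t = [[-t sin(τ_t)/(τ_t cos(τ_t)), t²(cos(τ_t)-1)/(τ_t² cos(τ_t)), 0], [t²(cos(τ_t)-1)/(τ_t² cos(τ_t)), t³(τ_t cos(τ_t) - sin(τ_t))/(τ_t³ cos(τ_t)), 0], [0, 0, -t]] with τ_t = t√σ. Then U_t satisfies the matrix Riccati equation U̇_t + U_t R U_t - C₁ U_t - U_t C₁ᵀ + C₂ = 0 with initial condition U₀ = 0, where R = diag(σ, 0, 0), C₁ is the matrix with (2,1)-entry 1 and all other entries 0, and C₂ = diag(1, 0, 1). -/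
open Matrix

/-- the explicit trigonometric matrix U_t solves the Riccati equation
U̇ + U R U - C₁ U - U C₁ᵀ + C₂ = 0 with U₀ = 0, where σ = h² + 2Hk > 0. -/
theorem stmt6 (h H k : ℝ) (hH : 0 < H)
    (σ : ℝ) (hσdef : σ = h ^ 2 + 2 * H * k) (hσ : 0 < σ)
    (C₁ C₂ R : Matrix (Fin 3) (Fin 3) ℝ)
    (hC₁ : C₁ = !![0, 0, 0; 1, 0, 0; 0, 0, 0])
    (hC₂ : C₂ = !![1, 0, 0; 0, 0, 0; 0, 0, 1])
    (hR : R = !![σ, 0, 0; 0, 0, 0; 0, 0, 0])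
    (U : ℝ → Matrix (Fin 3) (Fin 3) ℝ)
    (hU : ∀ t : ℝ,
      U t = !![-t * Real.sin (t * Real.sqrt σ) / ((t * Real.sqrt σ) * Real.cos (t * Real.sqrt σ)),
               t ^ 2 * (Real.cos (t * Real.sqrt σ) - 1) /
                 ((t * Real.sqrt σ) ^ 2 * Real.cos (t * Real.sqrt σ)), 0;
               t ^ 2 * (Real.cos (t * Real.sqrt σ) - 1) /
                 ((t * Real.sqrt σ) ^ 2 * Real.cos (t * Real.sqrt σ)),
               t ^ 3 * ((t * Real.sqrt σ) * Real.cos (t * Real.sqrt σ) - Real.sin (t * Real.sqrt σ)) /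
                 ((t * Real.sqrt σ) ^ 3 * Real.cos (t * Real.sqrt σ)), 0;
               0, 0, -t]) :
    (∀ t : ℝ, 0 < t → Real.cos (t * Real.sqrt σ) ≠ 0 → ∀ i j : Fin 3,
      HasDerivAt (fun s => U s i j)
        ((C₁ * U t + U t * C₁ᵀ - U t * R * U t - C₂) i j) t) ∧
    Filter.Tendsto U (nhdsWithin 0 (Set.Ioi 0)) (nhds 0) := by
  set s := Real.sqrt σ with hsdef
  have hs0 : 0 < s := Real.sqrt_pos.mpr hσ
  have hss : s * s = σ := Real.mul_self_sqrt hσ.le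
  have e11 : ∀ t : ℝ, -t * Real.sin (t*s) / ((t*s) * Real.cos (t*s))
      = -(Real.sin (t*s)) / (s * Real.cos (t*s)) := by
    intro t
    rcases eq_or_ne t 0 with rfl | ht
    · simp
    · rw [show -t * Real.sin (t*s) = t * -(Real.sin (t*s)) by ring,
        show (t*s) * Real.cos (t*s) = t * (s * Real.cos (t*s)) by ring,
        mul_div_mul_left _ _ ht]
  have e12 : ∀ t : ℝ, t^2 * (Real.cos (t*s) - 1) / ((t*s)^2 * Real.cos (t*s))
      = (Real.cos (t*s) - 1) / (σ * Real.cos (t*s)) := by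
    intro t
    rcases eq_or_ne t 0 with rfl | ht
    · simp
    · rw [show (t*s)^2 * Real.cos (t*s) = t^2 * (σ * Real.cos (t*s)) by rw [← hss]; ring,
        mul_div_mul_left _ _ (pow_ne_zero 2 ht)]
  have e22 : ∀ t : ℝ, t^3 * ((t*s) * Real.cos (t*s) - Real.sin (t*s)) / ((t*s)^3 * Real.cos (t*s))
      = ((t*s) * Real.cos (t*s) - Real.sin (t*s)) / ((σ * s) * Real.cos (t*s)) := by
    intro t
    rcases eq_or_ne t 0 with rfl | ht
    · simp
    · rw [show (t*s)^3 * Real.cos (t*s) = t^3 * ((σ * s) * Real.cos (t*s)) by rw [← hss]; ring,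
        mul_div_mul_left _ _ (pow_ne_zero 3 ht)]
  constructor
  · intro t ht hc i j
    have hsin : HasDerivAt (fun u : ℝ => Real.sin (u*s)) (Real.cos (t*s) * s) t := by
      exact (Real.hasDerivAt_sin (t*s)).comp t (hasDerivAt_mul_const (x := t) s)
    have hcos : HasDerivAt (fun u : ℝ => Real.cos (u*s)) (-Real.sin (t*s) * s) t := by
      exact (Real.hasDerivAt_cos (t*s)).comp t (hasDerivAt_mul_const (x := t) s)
    have hcs : s * Real.cos (t*s) ≠ 0 := mul_ne_zero hs0.ne' hc
    have hσc : σ * Real.cos (t*s) ≠ 0 := mul_ne_zero hσ.ne' hc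
    have hσsc : σ * s * Real.cos (t*s) ≠ 0 := mul_ne_zero (mul_ne_zero hσ.ne' hs0.ne') hc
    have d11 := (hsin.neg).div (hcos.const_mul s) hcs
    have d12 := (hcos.sub_const 1).div (hcos.const_mul σ) hσc
    have d22 := ((((hasDerivAt_id t).mul_const s).mul hcos).sub hsin).div
      (hcos.const_mul (σ * s)) hσsc
    have d33 : HasDerivAt (fun u : ℝ => -u) (-1 : ℝ) t := (hasDerivAt_id t).neg
    have hsc : Real.sin (t*s)^2 = 1 - Real.cos (t*s)^2 := by
      have := Real.sin_sq_add_cos_sq (t*s); linarith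
    fin_cases i <;> fin_cases j <;>
      simp only [hU, hC₁, hC₂, hR, Matrix.mul_apply, Fin.sum_univ_three, Matrix.transpose_apply,
        Matrix.sub_apply, Matrix.add_apply, Fin.mk_zero, Fin.mk_one, Fin.reduceFinMk, Matrix.of_apply,
        Matrix.cons_val', Matrix.cons_val_zero, Matrix.cons_val_one, Matrix.head_cons,
        Matrix.empty_val', Matrix.cons_val_fin_one, Matrix.head_fin_const, Fin.isValue,
        Matrix.cons_val_two, Matrix.tail_cons, e11, e12, e22]
    · refine HasDerivAt.congr_deriv d11 (Eq.symm ?_)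
      simp only [Pi.neg_apply]; rw [← hss]; field_simp; ring
    · refine HasDerivAt.congr_deriv d12 (Eq.symm ?_)
      rw [← hss]; field_simp; ring
    · refine HasDerivAt.congr_deriv (hasDerivAt_const t (0:ℝ)) (Eq.symm ?_); norm_num
    · refine HasDerivAt.congr_deriv d12 (Eq.symm ?_)
      rw [← hss]; field_simp; ring
    · refine HasDerivAt.congr_deriv d22 (Eq.symm ?_)
      simp only [Pi.sub_apply, Pi.mul_apply, id]; rw [← hss]; field_simp
      linear_combination s^4 * hsc
    · refine HasDerivAt.congr_deriv (hasDerivAt_const t (0:ℝ)) (Eq.symm ?_); norm_num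
    · refine HasDerivAt.congr_deriv (hasDerivAt_const t (0:ℝ)) (Eq.symm ?_); norm_num
    · refine HasDerivAt.congr_deriv (hasDerivAt_const t (0:ℝ)) (Eq.symm ?_); norm_num
    · refine HasDerivAt.congr_deriv d33 (Eq.symm ?_); norm_num
  · have hUeq : ∀ t : ℝ, U t =
        !![-(Real.sin (t*s)) / (s * Real.cos (t*s)), (Real.cos (t*s) - 1) / (σ * Real.cos (t*s)), 0;
           (Real.cos (t*s) - 1) / (σ * Real.cos (t*s)),
             ((t*s) * Real.cos (t*s) - Real.sin (t*s)) / ((σ * s) * Real.cos (t*s)), 0;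
           0, 0, -t] := by
      intro t
      rw [hU t, e11 t, e12 t, e22 t]
    refine tendsto_pi_nhds.mpr fun i => tendsto_pi_nhds.mpr fun j => ?_
    have key : ∀ (f : ℝ → ℝ), ContinuousAt f 0 → f 0 = 0 →
        Filter.Tendsto f (nhdsWithin 0 (Set.Ioi 0)) (nhds 0) := fun f hf h0 => by
      have := hf.tendsto.mono_left (nhdsWithin_le_nhds (s := Set.Ioi (0:ℝ)))
      rwa [h0] at this
    have ccos : Continuous fun u : ℝ => Real.cos (u * s) :=
      Real.continuous_cos.comp (continuous_id.mul continuous_const)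
    have csin : Continuous fun u : ℝ => Real.sin (u * s) :=
      Real.continuous_sin.comp (continuous_id.mul continuous_const)
    fin_cases i <;> fin_cases j <;>
      simp only [hUeq, Matrix.zero_apply, Fin.mk_zero, Fin.mk_one, Fin.reduceFinMk,
        Matrix.of_apply, Matrix.cons_val', Matrix.cons_val_zero, Matrix.cons_val_one,
        Matrix.head_cons, Matrix.empty_val', Matrix.cons_val_fin_one, Matrix.head_fin_const,
        Fin.isValue, Matrix.cons_val_two, Matrix.tail_cons]
    · exact key _ (((csin.neg).continuousAt).div
        ((continuous_const.mul ccos).continuousAt) (by simp [hs0.ne'])) (by simp)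
    · exact key _ (((ccos.sub continuous_const).continuousAt).div
        ((continuous_const.mul ccos).continuousAt) (by simp [hσ.ne'])) (by simp)
    · exact tendsto_const_nhds
    · exact key _ (((ccos.sub continuous_const).continuousAt).div
        ((continuous_const.mul ccos).continuousAt) (by simp [hσ.ne'])) (by simp)
    · exact key _ ((((continuous_id.mul continuous_const).mul ccos).sub csin).continuousAt.div
        ((continuous_const.mul ccos).continuousAt) (by simp [hσ.ne', hs0.ne'])) (by simp)
    · exact tendsto_const_nhds
    · exact tendsto_const_nhds
    · exact tendsto_const_nhds
    · exact key _ (continuous_neg.continuousAt) (by simp)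
end

section
/- Let S: (0,1) → Mat₃(ℝ) be defined in the σ > 0 case by S_t = [[τ₀(sin τ_t - τ_t cos τ_t)/D_t, τ₀²(1 - cos τ_t)/D_t, 0], [τ₀²(1 - cos τ_t)/D_t, τ₀³ sin τ_t/D_t, 0], [0, 0, 1/(1-t)]] where τ_t = (1-t)τ₀, τ₀ = √σ > 0, and D_t = 2 - 2cos τ_t - τ_t sin τ_t ≠ 0. Then S_t satisfies the Riccati equation Ṡ_t - R + S_t C₁ + C₁ᵀ S_t - S_t C₂ S_t = 0, where R = diag(σ, 0, 0), C₁ has a single 1 in position (2,1), and C₂ = diag(1, 0, 1). -/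
open Matrix

set_option maxHeartbeats 2000000 in
/-- the explicit matrix S_t (σ > 0 case) solves the Riccati equation
Ṡ - R + S C₁ + C₁ᵀ S - S C₂ S = 0 on the interval where its denominator is nonzero. -/
theorem stmt17 (σ : ℝ) (hσ : 0 < σ)
    (C₁ C₂ R : Matrix (Fin 3) (Fin 3) ℝ)
    (hC₁ : C₁ = !![0, 0, 0; 1, 0, 0; 0, 0, 0])
    (hC₂ : C₂ = !![1, 0, 0; 0, 0, 0; 0, 0, 1])
    (hR : R = !![σ, 0, 0; 0, 0, 0; 0, 0, 0])
    (τ : ℝ → ℝ) (hτ : ∀ t : ℝ, τ t = (1 - t) * Real.sqrt σ)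
    (D : ℝ → ℝ) (hD : ∀ t : ℝ, D t = 2 - 2 * Real.cos (τ t) - τ t * Real.sin (τ t))
    (S : ℝ → Matrix (Fin 3) (Fin 3) ℝ)
    (hS : ∀ t : ℝ, S t =
      !![Real.sqrt σ * (Real.sin (τ t) - τ t * Real.cos (τ t)) / D t,
         (Real.sqrt σ) ^ 2 * (1 - Real.cos (τ t)) / D t, 0;
         (Real.sqrt σ) ^ 2 * (1 - Real.cos (τ t)) / D t,
         (Real.sqrt σ) ^ 3 * Real.sin (τ t) / D t, 0;
         0, 0, 1 / (1 - t)]) :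
    ∀ t ∈ Set.Ioo (0 : ℝ) 1, D t ≠ 0 → ∀ i j : Fin 3,
      HasDerivAt (fun u => S u i j)
        ((R - S t * C₁ - C₁ᵀ * S t + S t * C₂ * S t) i j) t := by
  intro t ht hDne i j
  obtain ⟨s, hs0, rfl⟩ : ∃ s : ℝ, 0 < s ∧ σ = s ^ 2 :=
    ⟨_, Real.sqrt_pos.mpr hσ, (Real.sq_sqrt hσ.le).symm⟩
  have hss : Real.sqrt (s ^ 2) = s := Real.sqrt_sq hs0.le
  simp only [hss] at hτ hS
  rw [hD, hτ] at hDne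
  have ht1 : (1:ℝ) - t ≠ 0 := sub_ne_zero.mpr ht.2.ne'
  have pyth := Real.sin_sq_add_cos_sq ((1 - t) * s)
  have hτd : HasDerivAt (fun u : ℝ => (1 - u) * s) (-s) t := by
    simpa using ((hasDerivAt_id t).const_sub 1).mul_const s
  have hsin := hτd.sin
  have hcos := hτd.cos
  have hDd := ((hcos.const_mul 2).const_sub 2).sub (hτd.mul hsin)
  have hC₁T : C₁ᵀ = !![0, 1, 0; 0, 0, 0; 0, 0, 0] := by
    rw [hC₁]; ext i j; fin_cases i <;> fin_cases j <;> rfl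
  have ha := ((hsin.sub (hτd.mul hcos)).const_mul s).div hDd hDne
  have hb := ((hcos.const_sub 1).const_mul (s ^ 2)).div hDd hDne
  have hc := (hsin.const_mul (s ^ 3)).div hDd hDne
  have hd := ((hasDerivAt_id t).const_sub 1).inv ht1
  fin_cases i <;> fin_cases j <;>
    simp only [hS, hC₁, hC₂, hR, hτ, hD] <;>
    simp [hC₁T, Matrix.mul_apply, Fin.sum_univ_three, Matrix.cons_transpose,
      Matrix.vecHead, Matrix.vecTail] <;>
    first
      | exact hasDerivAt_const t 0
      | skip
  · -- (0,0)
    convert ha using 1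
    · rfl
    · rfl
    · rfl
    simp only [Pi.sub_apply, Pi.mul_apply, Pi.div_apply, id]
    set sn := Real.sin ((1 - t) * s) with hsn
    set cn := Real.cos ((1 - t) * s) with hcn
    have hDne' : (1 - cn) * 2 - s * (1 - t) * sn ≠ 0 := fun h => hDne (by linear_combination h)
    field_simp
    ring1
  · -- (0,1)
    convert hb using 1
    · rfl
    · rfl
    · rfl
    simp only [Pi.sub_apply, Pi.mul_apply, Pi.div_apply, id]
    set sn := Real.sin ((1 - t) * s) with hsn
    set cn := Real.cos ((1 - t) * s) with hcn
    field_simp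
    ring1
  · -- (1,0)
    convert hb using 1
    · rfl
    · rfl
    · rfl
    simp only [Pi.sub_apply, Pi.mul_apply, Pi.div_apply, id]
    set sn := Real.sin ((1 - t) * s) with hsn
    set cn := Real.cos ((1 - t) * s) with hcn
    field_simp
    ring1
  · -- (1,1)
    convert hc using 1
    · rfl
    · rfl
    · rfl
    simp only [Pi.sub_apply, Pi.mul_apply, Pi.div_apply, id]
    set sn := Real.sin ((1 - t) * s) with hsn
    set cn := Real.cos ((1 - t) * s) with hcn
    have hDne' : (1 - cn) * 2 - s * (1 - t) * sn ≠ 0 := fun h => hDne (by linear_combination h)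
    field_simp
    linear_combination (-1) * pyth
  · -- (2,2)
    convert hd using 1
    · rfl
    · rfl
    · rfl
    simp only [Pi.sub_apply, Pi.mul_apply, Pi.div_apply, id]
    field_simp
end
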